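/- If R is any broad relation on a set A, then the quotient of the reflexive-transitive closure of R by the equivalence relation identifying mutually related elements is a broad poset. -/

import Mathlib

/-- A (commutative) broad poset: a set `A` with a relation between the free
commutative monoid on `A` (modelled as `Multiset A`) and `A`, satisfying
broad reflexivity, transitivity and antisymmetry. -/
structure BroadPoset (A : Type) where
  le : Multiset A → A → Prop
  le_refl : ∀ a : A, le {a} a
  le_trans : ∀ (a : A) (l : List (Multiset A × A)),
      le (↑(l.map Prod.snd) : Multiset A) a → (∀ p ∈ l, le p.1 p.2) →
      le (l.map Prod.fst).sum a
  le_antisymm : ∀ a a' : A, le {a} a' → le {a'} a → a = a'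

/-- The descendance relation: `b ≤_d a` iff `b` occurs in some `b' ≤ a`. -/
def BroadPoset.descLe {A : Type} (P : BroadPoset A) (b a : A) : Prop :=
  ∃ b' : Multiset A, P.le b' a ∧ b ∈ b'

/-- Strict broad inequality `b < a`. -/
def BroadPoset.blt {A : Type} (P : BroadPoset A) (b : Multiset A) (a : A) : Prop :=
  P.le b a ∧ b ≠ {a}

/-- The induced order on `A⁺`: `s ≤ t` iff `t = t₁·…·tₙ` and `s = s₁·…·sₙ`
with `sᵢ ≤ tᵢ` for each `i`. -/
def BroadPoset.multLe {A : Type} (P : BroadPoset A) (s t : Multiset A) : Prop :=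
  ∃ l : List (Multiset A × A), (↑(l.map Prod.snd) : Multiset A) = t ∧
    (l.map Prod.fst).sum = s ∧ ∀ p ∈ l, P.le p.1 p.2

/-- A leaf: an element with `ĥa = ∅`. -/
def BroadPoset.IsLeaf {A : Type} (P : BroadPoset A) (a : A) : Prop :=
  ∀ b : Multiset A, ¬ P.blt b a

/-- `u` is the maximum of `ĥa = {b | b < a}`, i.e. `u = a↑`; its members are
the children of `a`. -/
def BroadPoset.IsChildSet {A : Type} (P : BroadPoset A) (a : A) (u : Multiset A) : Prop :=
  P.blt u a ∧ ∀ b : Multiset A, P.blt b a → P.multLe b u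

/-- `r` is the root: every element is a descendant of `r` (extremum of `≤_d`). -/
def BroadPoset.IsRoot {A : Type} (P : BroadPoset A) (r : A) : Prop :=
  ∀ a : A, P.descLe a r

/-- Monotone functions between broad posets. -/
def IsMonotone {A B : Type} (P : BroadPoset A) (Q : BroadPoset B) (f : A → B) : Prop :=
  ∀ (b : Multiset A) (a : A), P.le b a → Q.le (b.map f) (f a)

/-- A link: `b < a` such that `b ≤ b' < a` implies `b = b'`. -/
def BroadPoset.IsLink {A : Type} (P : BroadPoset A) (b : Multiset A) (a : A) : Prop :=
  P.blt b a ∧ ∀ b' : Multiset A, P.multLe b b' → P.blt b' a → b = b'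

/-- A dendroidally ordered set: a finite broad poset which is simple, has a
root, and in which every non-leaf has children. -/
structure BroadPoset.IsDendroidal {A : Type} (P : BroadPoset A) : Prop where
  finite : Set.Finite {p : Multiset A × A | P.le p.1 p.2}
  simple : ∀ (b : Multiset A) (a : A), P.le b a → b.Nodup
  root : ∃ r : A, P.IsRoot r
  children : ∀ a : A, ¬ P.IsLeaf a → ∃ u : Multiset A, P.IsChildSet a u

/-- A broad relation is transitive. -/
def IsTransRel {A : Type} (S : Multiset A → A → Prop) : Prop :=
  ∀ (a : A) (l : List (Multiset A × A)),
    S (↑(l.map Prod.snd) : Multiset A) a → (∀ p ∈ l, S p.1 p.2) →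
    S (l.map Prod.fst).sum a

/-- The reflexive-transitive closure of a broad relation `R`: the intersection
of all reflexive transitive broad relations containing `R`. -/
def rtClosure {A : Type} (R : Multiset A → A → Prop) : Multiset A → A → Prop :=
  fun b a => ∀ S : Multiset A → A → Prop,
    (∀ b' a', R b' a' → S b' a') → (∀ x : A, S {x} x) → IsTransRel S → S b a

/-- `a ∼ b` iff `a` and `b` are mutually related by the closure. -/
def mutRel {A : Type} (R : Multiset A → A → Prop) (a b : A) : Prop :=
  rtClosure R {a} b ∧ rtClosure R {b} a

/-- The relation descended to the quotient `A/∼`. -/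
def quotLe {A : Type} (R : Multiset A → A → Prop) :
    Multiset (Quot (mutRel R)) → Quot (mutRel R) → Prop :=
  fun b a => ∃ (b' : Multiset A) (a' : A),
    b'.map (Quot.mk (mutRel R)) = b ∧ Quot.mk (mutRel R) a' = a ∧ rtClosure R b' a'


section Aux
variable {A : Type} (R : Multiset A → A → Prop)

theorem rt_refl (x : A) : rtClosure R {x} x := fun _ _ hr _ => hr x

theorem rt_trans : IsTransRel (rtClosure R) := by
  intro a l h hl S hR hrefl htrans
  exact htrans a l (h S hR hrefl htrans) (fun p hp => hl p hp S hR hrefl htrans)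

theorem rt_comp {x : Multiset A} {y z : A} (h1 : rtClosure R x y) (h2 : rtClosure R {y} z) :
    rtClosure R x z := by
  have h := rt_trans R z [(x, y)] (by simpa using h2) (by simpa using h1)
  simpa using h

theorem mutRel_equiv : Equivalence (mutRel R) :=
  ⟨fun x => ⟨rt_refl R x, rt_refl R x⟩,
   fun h => ⟨h.2, h.1⟩,
   fun h1 h2 => ⟨rt_comp R h1.1 h2.1, rt_comp R h2.2 h1.2⟩⟩

theorem quot_eq_iff {x y : A} :
    Quot.mk (mutRel R) x = Quot.mk (mutRel R) y ↔ mutRel R x y := by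
  rw [Quot.eq]
  exact (mutRel_equiv R).eqvGen_iff

theorem rel_to_list {c b : Multiset A} (h : Multiset.Rel (mutRel R) c b) :
    ∃ l : List (Multiset A × A), (↑(l.map Prod.snd) : Multiset A) = b ∧
      (l.map Prod.fst).sum = c ∧ ∀ p ∈ l, rtClosure R p.1 p.2 := by
  induction h with
  | zero => exact ⟨[], by simp, by simp, by simp⟩
  | @cons x y cs bs hxy _ ih =>
    obtain ⟨l, h1, h2, h3⟩ := ih
    refine ⟨({x}, y) :: l, by rw [← h1]; rfl, by simp [h2, Multiset.singleton_add], ?_⟩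
    intro p hp
    rcases List.mem_cons.mp hp with h | h
    · subst h; exact hxy.1
    · exact h3 p h

theorem rt_congr {c b : Multiset A} {a : A} (h : Multiset.Rel (mutRel R) c b)
    (hb : rtClosure R b a) : rtClosure R c a := by
  obtain ⟨l, h1, h2, h3⟩ := rel_to_list R h
  have h4 := rt_trans R a l (h1 ▸ hb) h3
  rwa [h2] at h4

theorem rel_of_map_eq {s t : Multiset A}
    (h : s.map (Quot.mk (mutRel R)) = t.map (Quot.mk (mutRel R))) :
    Multiset.Rel (mutRel R) s t := by
  classical
  induction s using Multiset.induction generalizing t with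
  | empty =>
    simp only [Multiset.map_zero] at h
    rw [eq_comm, Multiset.map_eq_zero] at h
    subst h; exact Multiset.Rel.zero
  | cons a s ih =>
    have hmem : Quot.mk (mutRel R) a ∈ t.map (Quot.mk (mutRel R)) := by
      rw [← h]; simp
    obtain ⟨b, hbt, hqb⟩ := Multiset.mem_map.mp hmem
    have ht : t = b ::ₘ t.erase b := (Multiset.cons_erase hbt).symm
    rw [ht, Multiset.map_cons, Multiset.map_cons, hqb.symm] at h
    have h' := (Multiset.cons_inj_right _).mp h
    rw [ht]
    exact Multiset.Rel.cons ((quot_eq_iff R).mp hqb.symm) (ih h')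

theorem map_listsum {B : Type} (f : A → B) (l : List (Multiset A)) :
    (l.sum).map f = (l.map (Multiset.map f)).sum := by
  induction l with
  | nil => simp
  | cons x xs ih => simp [ih]

theorem lift_list (l : List (Multiset (Quot (mutRel R)) × Quot (mutRel R)))
    (h : ∀ p ∈ l, quotLe R p.1 p.2) :
    ∃ lA : List (Multiset A × A),
      lA.map (fun p => (p.1.map (Quot.mk (mutRel R)), Quot.mk (mutRel R) p.2)) = l ∧
      ∀ p ∈ lA, rtClosure R p.1 p.2 := by
  induction l with
  | nil => exact ⟨[], rfl, by simp⟩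
  | cons x xs ih =>
    obtain ⟨lA, h1, h2⟩ := ih (fun p hp => h p (List.mem_cons_of_mem _ hp))
    obtain ⟨b', a', hb, ha, hr⟩ := h x List.mem_cons_self
    refine ⟨(b', a') :: lA, by simp [h1, hb, ha], ?_⟩
    intro p hp
    rcases List.mem_cons.mp hp with h | h
    · subst h; exact hr
    · exact h2 p h

theorem map_eq_singleton' {s : Multiset A} {x : Quot (mutRel R)}
    (h : s.map (Quot.mk (mutRel R)) = {x}) :
    ∃ y, s = {y} ∧ Quot.mk (mutRel R) y = x := by
  have hc : Multiset.card s = 1 := by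
    have := congrArg Multiset.card h
    simpa using this
  obtain ⟨y, hy⟩ := Multiset.card_eq_one.mp hc
  subst hy
  simp only [Multiset.map_singleton, Multiset.singleton_inj] at h
  exact ⟨y, rfl, h⟩

end Aux

/-- The quotient of the reflexive-transitive closure of any broad relation by
the mutual-relatedness equivalence is a broad poset. -/
theorem quotient_rtClosure_isBroadPoset {A : Type} (R : Multiset A → A → Prop) :
    ∃ P : BroadPoset (Quot (mutRel R)), P.le = quotLe R := by
  refine ⟨⟨quotLe R, ?_, ?_, ?_⟩, rfl⟩
  · intro a
    induction a using Quot.ind with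
    | _ x => exact ⟨{x}, x, by simp, rfl, rt_refl R x⟩
  · intro a l hla hl
    obtain ⟨b', a', hb, ha, hr⟩ := hla
    obtain ⟨lA, hmap, hrel⟩ := lift_list R l hl
    have hsnd : (↑(lA.map Prod.snd) : Multiset A).map (Quot.mk (mutRel R)) =
        b'.map (Quot.mk (mutRel R)) := by
      rw [hb, ← hmap]
      simp [Multiset.map_coe, List.map_map, Function.comp_def]
    have hrel' : Multiset.Rel (mutRel R) (↑(lA.map Prod.snd)) b' := rel_of_map_eq R hsnd
    have h1 : rtClosure R (↑(lA.map Prod.snd)) a' := rt_congr R hrel' hr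
    have h2 : rtClosure R (lA.map Prod.fst).sum a' := rt_trans R a' lA h1 hrel
    refine ⟨(lA.map Prod.fst).sum, a', ?_, ha, h2⟩
    rw [map_listsum, ← hmap]
    simp [List.map_map, Function.comp_def]
  · intro a a' h1 h2
    obtain ⟨b1, x1, hb1, hx1, hr1⟩ := h1
    obtain ⟨b2, x2, hb2, hx2, hr2⟩ := h2
    obtain ⟨y1, rfl, hy1⟩ := map_eq_singleton' R hb1
    obtain ⟨y2, rfl, hy2⟩ := map_eq_singleton' R hb2
    have e1 : mutRel R x1 y2 := (quot_eq_iff R).mp (hx1.trans hy2.symm)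
    have e2 : mutRel R x2 y1 := (quot_eq_iff R).mp (hx2.trans hy1.symm)
    have c1 : rtClosure R {y1} y2 := rt_comp R hr1 e1.1
    have c2 : rtClosure R {y2} y1 := rt_comp R hr2 e2.1
    rw [← hy1, ← hy2]
    exact Quot.sound ⟨c1, c2⟩
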